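/- Let F and Θ_j for every j ∈ J be strictly convex, and let S be convex. Suppose that for any x, y ∈ S with x ≠ y, either there exists i ∈ I with L(x,y) ∩ Ω_i = ∅ or there exists j ∈ J with L(x,y) ∩ Θ_j = ∅. Suppose further that for every x ∈ S the sets P_F(x; Ω_i) and Π_F(x; Θ_j) are nonempty for all i ∈ I and j ∈ J. Then the function H is strictly convex on S, and consequently the set of minimizers of H over S has at most one element. -/

import Mathlib

open Set Pointwise Filter Topology Bornology Function

variable {X : Type*} [NormedAddCommGroup X] [NormedSpace ℝ X]

/-- The Minkowski gauge of `F`: `ρ_F(x) = inf {t ≥ 0 : x ∈ t • F}`. -/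
noncomputable def rhoF (F : Set X) (x : X) : ℝ :=
  sInf {t : ℝ | 0 ≤ t ∧ x ∈ t • F}

/-- The maximal time function `C_F(x; Q) = sup {ρ_F(q - x) : q ∈ Q}`. -/
noncomputable def maxTime (F Q : Set X) (x : X) : ℝ :=
  sSup ((fun q => rhoF F (q - x)) '' Q)

/-- The minimal time function `T_F(x; Θ) = inf {ρ_F(q - x) : q ∈ Θ}`. -/
noncomputable def minTime (F Θ : Set X) (x : X) : ℝ :=
  sInf ((fun q => rhoF F (q - x)) '' Θ)

/-- `G(x) = max {C_F(x; Ω_i), T_F(x; Θ_j) : i ∈ I, j ∈ J}`. -/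
noncomputable def GFun {ι κ : Type*} (F : Set X) (I : Finset ι) (J : Finset κ)
    (Ω : ι → Set X) (Θ : κ → Set X) (x : X) : ℝ :=
  sSup ((fun i => maxTime F (Ω i) x) '' ↑I ∪ (fun j => minTime F (Θ j) x) '' ↑J)

/-- `H(x) = Σ_{i∈I} C_F(x; Ω_i) + Σ_{j∈J} T_F(x; Θ_j)`. -/
noncomputable def HFun {ι κ : Type*} (F : Set X) (I : Finset ι) (J : Finset κ)
    (Ω : ι → Set X) (Θ : κ → Set X) (x : X) : ℝ :=
  ∑ i ∈ I, maxTime F (Ω i) x + ∑ j ∈ J, minTime F (Θ j) x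

/-- The farthest projection `P_F(x; Ω) = {ω ∈ Ω : ρ_F(ω - x) = C_F(x; Ω)}`. -/
def farProj (F Ω : Set X) (x : X) : Set X :=
  {ω ∈ Ω | rhoF F (ω - x) = maxTime F Ω x}

/-- The projection `Π_F(x; Θ) = {u ∈ Θ : ρ_F(u - x) = T_F(x; Θ)}`. -/
def nearProj (F Θ : Set X) (x : X) : Set X :=
  {u ∈ Θ | rhoF F (u - x) = minTime F Θ x}

/-- The line through `x` and `y`: `L(x,y) = {z : X | ∃ t : ℝ, z = t•x + (1-t)•y}`. -/
def lineThrough (x y : X) : Set X :=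
  {z : X | ∃ t : ℝ, z = t • x + (1 - t) • y}

lemma rhoF_eq_gauge {F : Set X} (h0 : (0:X) ∈ F) : rhoF F = gauge F := by
  funext x
  rcases eq_or_ne x 0 with rfl | hx
  · rw [gauge_zero]
    refine le_antisymm ?_ (Real.sInf_nonneg fun t ht => ht.1)
    exact csInf_le ⟨0, fun t ht => ht.1⟩ ⟨le_refl 0, ⟨0, h0, by simp⟩⟩
  · unfold rhoF gauge
    congr 1
    ext t
    simp only [mem_setOf_eq]
    constructor
    · rintro ⟨ht, hm⟩
      rcases ht.eq_or_lt with rfl | ht'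
      · exact absurd (mem_singleton_iff.1 (zero_smul_set_subset F hm)) hx
      · exact ⟨ht', hm⟩
    · rintro ⟨ht, hm⟩
      exact ⟨ht.le, hm⟩

lemma line_facts {x y ω : X} (hxy : x ≠ y) (hωL : ω ∉ lineThrough x y) :
    ω - x ≠ 0 ∧ ω - y ≠ 0 ∧ ∀ s : ℝ, 0 < s → ω - x ≠ s • (ω - y) := by
  refine ⟨fun h => hωL ⟨1, by simp [sub_eq_zero.1 h]⟩,
    fun h => hωL ⟨0, by simp [sub_eq_zero.1 h]⟩, ?_⟩
  intro s _ h
  rcases eq_or_ne s 1 with rfl | hs1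
  · rw [one_smul] at h
    exact hxy (sub_right_inj.1 h)
  · apply hωL
    have h1s : (1:ℝ) - s ≠ 0 := sub_ne_zero.2 (Ne.symm hs1)
    refine ⟨(1-s)⁻¹, ?_⟩
    have hx' : x = ω - s • (ω - y) := by rw [← h]; abel
    rw [hx']
    match_scalars <;> field_simp <;> ring

lemma gauge_strict_ineq {F : Set X} (hFc : IsClosed F) (hFb : IsBounded F)
    (hFconv : Convex ℝ F) (hF0 : (0:X) ∈ interior F) (hFs : StrictConvex ℝ F)
    {p q : X} (hp : p ≠ 0) (hq : q ≠ 0) (hnp : ∀ s : ℝ, 0 < s → p ≠ s • q)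
    {a b : ℝ} (ha : 0 < a) (hb : 0 < b) (hab : a + b = 1) :
    gauge F (a • p + b • q) < a * gauge F p + b * gauge F q := by
  have hFnhds : F ∈ 𝓝 (0:X) := mem_interior_iff_mem_nhds.1 hF0
  have habs : Absorbent ℝ F := absorbent_nhds_zero hFnhds
  have hvb : IsVonNBounded ℝ F := by rw [NormedSpace.isVonNBounded_iff]; exact hFb
  have hα : 0 < gauge F p := (gauge_pos habs hvb).2 hp
  have hβ : 0 < gauge F q := (gauge_pos habs hvb).2 hq
  have hmemF : ∀ v : X, v ≠ 0 → (gauge F v)⁻¹ • v ∈ F := by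
    intro v hv
    have hγ : 0 < gauge F v := (gauge_pos habs hvb).2 hv
    have h1 : gauge F ((gauge F v)⁻¹ • v) = 1 := by
      rw [gauge_smul_of_nonneg (inv_nonneg.2 hγ.le), smul_eq_mul, inv_mul_cancel₀ hγ.ne']
    have := (gauge_le_one_iff_mem_closure hFconv hFnhds).1 h1.le
    rwa [hFc.closure_eq] at this
  have hu : (gauge F p)⁻¹ • p ∈ F := hmemF p hp
  have hv : (gauge F q)⁻¹ • q ∈ F := hmemF q hq
  have huv : (gauge F p)⁻¹ • p ≠ (gauge F q)⁻¹ • q := by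
    intro h
    apply hnp (gauge F p * (gauge F q)⁻¹) (by positivity)
    calc p = gauge F p • ((gauge F p)⁻¹ • p) := (smul_inv_smul₀ hα.ne' p).symm
      _ = gauge F p • ((gauge F q)⁻¹ • q) := by rw [h]
      _ = (gauge F p * (gauge F q)⁻¹) • q := (mul_smul _ _ _).symm
  have hcpos : 0 < a * gauge F p + b * gauge F q := by positivity
  have hs0 : 0 < a * gauge F p / (a * gauge F p + b * gauge F q) := by positivity
  have hs1 : a * gauge F p / (a * gauge F p + b * gauge F q) < 1 := by
    rw [div_lt_one hcpos]; nlinarith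
  have hw : (a * gauge F p / (a * gauge F p + b * gauge F q)) • ((gauge F p)⁻¹ • p)
      + (1 - a * gauge F p / (a * gauge F p + b * gauge F q)) • ((gauge F q)⁻¹ • q)
      ∈ interior F := hFs hu hv huv hs0 (by linarith) (by ring)
  have hlt := interior_subset_gauge_lt_one F hw
  simp only [mem_setOf_eq] at hlt
  have hkey : a • p + b • q = (a * gauge F p + b * gauge F q) •
      ((a * gauge F p / (a * gauge F p + b * gauge F q)) • ((gauge F p)⁻¹ • p)
        + (1 - a * gauge F p / (a * gauge F p + b * gauge F q)) • ((gauge F q)⁻¹ • q)) := by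
    match_scalars <;> field_simp <;> ring
  rw [hkey, gauge_smul_of_nonneg hcpos.le, smul_eq_mul]
  calc (a * gauge F p + b * gauge F q) * gauge F _
      < (a * gauge F p + b * gauge F q) * 1 := by
        exact (mul_lt_mul_iff_right₀ hcpos).2 hlt
    _ = a * gauge F p + b * gauge F q := mul_one _

/-- Theorem 3.13. -/
theorem stmt18
    {ι κ : Type*} (F : Set X) (I : Finset ι) (J : Finset κ)
    (Ω : ι → Set X) (Θ : κ → Set X) (S : Set X)
    (hFc : IsClosed F) (hFb : IsBounded F) (hFconv : Convex ℝ F)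
    (hF0 : (0 : X) ∈ interior F)
    (hΩne : ∀ i ∈ I, (Ω i).Nonempty) (hΩc : ∀ i ∈ I, IsClosed (Ω i))
    (hΩb : ∀ i ∈ I, IsBounded (Ω i))
    (hΘne : ∀ j ∈ J, (Θ j).Nonempty) (hΘc : ∀ j ∈ J, IsClosed (Θ j))
    (hSne : S.Nonempty) (hSc : IsClosed S)
    (hIJ : I.Nonempty ∨ J.Nonempty)
    (hFs : StrictConvex ℝ F) (hΘs : ∀ j ∈ J, StrictConvex ℝ (Θ j))
    (hSconv : Convex ℝ S)
    (hline : ∀ x ∈ S, ∀ y ∈ S, x ≠ y →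
      (∃ i ∈ I, lineThrough x y ∩ Ω i = ∅) ∨ (∃ j ∈ J, lineThrough x y ∩ Θ j = ∅))
    (hP : ∀ x ∈ S, ∀ i ∈ I, (farProj F (Ω i) x).Nonempty)
    (hPi : ∀ x ∈ S, ∀ j ∈ J, (nearProj F (Θ j) x).Nonempty) :
    StrictConvexOn ℝ S (HFun F I J Ω Θ) ∧
      {x ∈ S | ∀ y ∈ S, HFun F I J Ω Θ x ≤ HFun F I J Ω Θ y}.Subsingleton := by
  have h0F : (0:X) ∈ F := interior_subset hF0
  have hFnhds : F ∈ 𝓝 (0:X) := mem_interior_iff_mem_nhds.1 hF0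
  have habs : Absorbent ℝ F := absorbent_nhds_zero hFnhds
  have hg : rhoF F = gauge F := rhoF_eq_gauge h0F
  obtain ⟨r, hr, hball⟩ : ∃ r > 0, Metric.ball (0:X) r ⊆ F := Metric.mem_nhds_iff.1 hFnhds
  have gbd : ∀ v : X, gauge F v ≤ ‖v‖ / r := by
    intro v
    have := gauge_mono (absorbent_ball_zero hr) hball v
    rwa [gauge_ball hr.le] at this
  -- bounded above for maxTime
  have hbddΩ : ∀ i ∈ I, ∀ p : X, BddAbove ((fun q => rhoF F (q - p)) '' Ω i) := by
    intro i hi p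
    obtain ⟨M, hM⟩ := isBounded_iff_forall_norm_le.1 (hΩb i hi)
    refine ⟨(M + ‖p‖) / r, ?_⟩
    rintro t ⟨q, hq, rfl⟩
    rw [hg]
    refine (gbd _).trans ?_
    have : ‖q - p‖ ≤ M + ‖p‖ := (norm_sub_le _ _).trans (by linarith [hM q hq])
    exact div_le_div_of_nonneg_right this hr.le
  have hCub : ∀ i ∈ I, ∀ w ∈ Ω i, ∀ p : X, gauge F (w - p) ≤ maxTime F (Ω i) p := by
    intro i hi w hw p
    rw [← hg]
    exact le_csSup (hbddΩ i hi p) ⟨w, hw, rfl⟩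
  have hTub : ∀ j : κ, ∀ w ∈ Θ j, ∀ p : X, minTime F (Θ j) p ≤ gauge F (w - p) := by
    intro j w hw p
    rw [← hg]
    refine csInf_le ⟨0, ?_⟩ ⟨w, hw, rfl⟩
    rintro t ⟨q, hq, rfl⟩
    rw [hg]
    exact gauge_nonneg _
  -- the key strict inequality
  have key : ∀ x ∈ S, ∀ y ∈ S, x ≠ y → ∀ a b : ℝ, 0 < a → 0 < b → a + b = 1 →
      HFun F I J Ω Θ (a • x + b • y) <
        a * HFun F I J Ω Θ x + b * HFun F I J Ω Θ y := by
    intro x hx y hy hxy a b ha hb hab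
    have hzS : a • x + b • y ∈ S := hSconv hx hy ha.le hb.le hab
    have hzL : a • x + b • y ∈ lineThrough x y := ⟨a, by rw [show (1:ℝ) - a = b by linarith]⟩
    have hsplit : ∀ w : X, w - (a • x + b • y) = a • (w - x) + b • (w - y) := by
      intro w
      have h : a • (w - x) + b • (w - y) = (a + b) • w - (a • x + b • y) := by module
      rw [h, hab, one_smul]
    have gconv : ∀ p q : X, gauge F (a • p + b • q) ≤ a * gauge F p + b * gauge F q := by
      intro p q
      calc gauge F (a • p + b • q) ≤ gauge F (a • p) + gauge F (b • q) :=
            gauge_add_le hFconv habs _ _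
        _ = a * gauge F p + b * gauge F q := by
            rw [gauge_smul_of_nonneg ha.le, gauge_smul_of_nonneg hb.le, smul_eq_mul, smul_eq_mul]
    -- non-strict inequalities
    have hCle : ∀ i ∈ I, maxTime F (Ω i) (a • x + b • y) ≤
        a * maxTime F (Ω i) x + b * maxTime F (Ω i) y := by
      intro i hi
      obtain ⟨ω, hωΩ, hωeq⟩ := hP _ hzS i hi
      rw [← hωeq, hg, hsplit ω]
      exact (gconv _ _).trans (add_le_add
        (mul_le_mul_of_nonneg_left (hCub i hi ω hωΩ x) ha.le)
        (mul_le_mul_of_nonneg_left (hCub i hi ω hωΩ y) hb.le))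
    have hTle : ∀ j ∈ J, minTime F (Θ j) (a • x + b • y) ≤
        a * minTime F (Θ j) x + b * minTime F (Θ j) y := by
      intro j hj
      obtain ⟨u, huΘ, hueq⟩ := hPi x hx j hj
      obtain ⟨v, hvΘ, hveq⟩ := hPi y hy j hj
      have hgu : gauge F (u - x) = minTime F (Θ j) x := by rw [← hg]; exact hueq
      have hgv : gauge F (v - y) = minTime F (Θ j) y := by rw [← hg]; exact hveq
      have hw : a • u + b • v ∈ Θ j := (hΘs j hj).convex huΘ hvΘ ha.le hb.le hab
      have h1 : a • u + b • v - (a • x + b • y) = a • (u - x) + b • (v - y) := by module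
      calc minTime F (Θ j) (a • x + b • y) ≤ gauge F (a • u + b • v - (a • x + b • y)) :=
            hTub j _ hw _
        _ ≤ a * gauge F (u - x) + b * gauge F (v - y) := by rw [h1]; exact gconv _ _
        _ = a * minTime F (Θ j) x + b * minTime F (Θ j) y := by rw [hgu, hgv]
    have hid : ∑ i ∈ I, (a * maxTime F (Ω i) x + b * maxTime F (Ω i) y)
        + ∑ j ∈ J, (a * minTime F (Θ j) x + b * minTime F (Θ j) y)
        = a * (∑ i ∈ I, maxTime F (Ω i) x + ∑ j ∈ J, minTime F (Θ j) x)
          + b * (∑ i ∈ I, maxTime F (Ω i) y + ∑ j ∈ J, minTime F (Θ j) y) := by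
      simp only [Finset.sum_add_distrib, Finset.mul_sum, mul_add]
      ring
    rcases hline x hx y hy hxy with ⟨i0, hi0, hE⟩ | ⟨j0, hj0, hE⟩
    · -- strict inequality for the i0 term
      have hCstrict : maxTime F (Ω i0) (a • x + b • y) <
          a * maxTime F (Ω i0) x + b * maxTime F (Ω i0) y := by
        obtain ⟨ω, hωΩ, hωeq⟩ := hP _ hzS i0 hi0
        have hωL : ω ∉ lineThrough x y := fun hL =>
          (eq_empty_iff_forall_notMem.1 hE ω) ⟨hL, hωΩ⟩
        obtain ⟨h1, h2, h3⟩ := line_facts hxy hωL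
        rw [← hωeq, hg, hsplit ω]
        calc gauge F (a • (ω - x) + b • (ω - y))
            < a * gauge F (ω - x) + b * gauge F (ω - y) :=
              gauge_strict_ineq hFc hFb hFconv hF0 hFs h1 h2 h3 ha hb hab
          _ ≤ a * maxTime F (Ω i0) x + b * maxTime F (Ω i0) y :=
              add_le_add (mul_le_mul_of_nonneg_left (hCub i0 hi0 ω hωΩ x) ha.le)
                (mul_le_mul_of_nonneg_left (hCub i0 hi0 ω hωΩ y) hb.le)
      have hsum1 : ∑ i ∈ I, maxTime F (Ω i) (a • x + b • y) <
          ∑ i ∈ I, (a * maxTime F (Ω i) x + b * maxTime F (Ω i) y) :=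
        Finset.sum_lt_sum hCle ⟨i0, hi0, hCstrict⟩
      have hsum2 : ∑ j ∈ J, minTime F (Θ j) (a • x + b • y) ≤
          ∑ j ∈ J, (a * minTime F (Θ j) x + b * minTime F (Θ j) y) :=
        Finset.sum_le_sum hTle
      unfold HFun
      linarith
    · -- strict inequality for the j0 term
      have hT : ∀ w ∈ Θ j0, w ∉ lineThrough x y := fun w hw hL =>
        (eq_empty_iff_forall_notMem.1 hE w) ⟨hL, hw⟩
      obtain ⟨u, huΘ, hueq⟩ := hPi x hx j0 hj0
      obtain ⟨v, hvΘ, hveq⟩ := hPi y hy j0 hj0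
      have hgu : gauge F (u - x) = minTime F (Θ j0) x := by rw [← hg]; exact hueq
      have hgv : gauge F (v - y) = minTime F (Θ j0) y := by rw [← hg]; exact hveq
      have hTstrict : minTime F (Θ j0) (a • x + b • y) <
          a * minTime F (Θ j0) x + b * minTime F (Θ j0) y := by
        by_cases huv : u = v
        · subst huv
          obtain ⟨h1, h2, h3⟩ := line_facts hxy (hT u huΘ)
          calc minTime F (Θ j0) (a • x + b • y) ≤ gauge F (u - (a • x + b • y)) :=
                hTub j0 u huΘ _
            _ = gauge F (a • (u - x) + b • (u - y)) := by rw [hsplit u]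
            _ < a * gauge F (u - x) + b * gauge F (u - y) :=
                gauge_strict_ineq hFc hFb hFconv hF0 hFs h1 h2 h3 ha hb hab
            _ = a * minTime F (Θ j0) x + b * minTime F (Θ j0) y := by rw [hgu, hgv]
        · have hwint : a • u + b • v ∈ interior (Θ j0) :=
            hΘs j0 hj0 huΘ hvΘ huv ha hb hab
          have hwΘ : a • u + b • v ∈ Θ j0 := interior_subset hwint
          have hwz : a • u + b • v - (a • x + b • y) ≠ 0 :=
            sub_ne_zero.2 (fun h => hT _ hwΘ (h ▸ hzL))
          have hvb' : IsVonNBounded ℝ F := by rw [NormedSpace.isVonNBounded_iff]; exact hFb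
          have hg0 : 0 < gauge F (a • u + b • v - (a • x + b • y)) :=
            (gauge_pos habs hvb').2 hwz
          obtain ⟨δ, hδ, hballw⟩ :=
            Metric.mem_nhds_iff.1 (mem_interior_iff_mem_nhds.1 hwint)
          have hnz : 0 < ‖a • u + b • v - (a • x + b • y)‖ := norm_pos_iff.2 hwz
          set ε := min (δ / (2 * ‖a • u + b • v - (a • x + b • y)‖)) 2⁻¹ with hεdef
          have hε0 : 0 < ε := lt_min (by positivity) (by norm_num)
          have hε1 : ε < 1 := (min_le_right _ _).trans_lt (by norm_num)
          have hmem : (a • u + b • v) + ε • ((a • x + b • y) - (a • u + b • v)) ∈ Θ j0 := by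
            apply hballw
            rw [Metric.mem_ball, dist_eq_norm]
            have heq : (a • u + b • v) + ε • ((a • x + b • y) - (a • u + b • v))
                - (a • u + b • v) = ε • ((a • x + b • y) - (a • u + b • v)) := by abel
            rw [heq, norm_smul, Real.norm_of_nonneg hε0.le, norm_sub_rev]
            have h1 : ε ≤ δ / (2 * ‖a • u + b • v - (a • x + b • y)‖) := min_le_left _ _
            calc ε * ‖a • u + b • v - (a • x + b • y)‖
                ≤ δ / (2 * ‖a • u + b • v - (a • x + b • y)‖)
                    * ‖a • u + b • v - (a • x + b • y)‖ := by
                  exact mul_le_mul_of_nonneg_right h1 hnz.le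
              _ = δ / 2 := by field_simp
              _ < δ := by linarith
          have hiden : (a • u + b • v) + ε • ((a • x + b • y) - (a • u + b • v))
              - (a • x + b • y) = (1 - ε) • (a • u + b • v - (a • x + b • y)) := by module
          have h1 : a • u + b • v - (a • x + b • y) = a • (u - x) + b • (v - y) := by module
          calc minTime F (Θ j0) (a • x + b • y)
              ≤ gauge F ((a • u + b • v) + ε • ((a • x + b • y) - (a • u + b • v))
                  - (a • x + b • y)) := hTub j0 _ hmem _
            _ = (1 - ε) * gauge F (a • u + b • v - (a • x + b • y)) := by
                rw [hiden, gauge_smul_of_nonneg (by linarith), smul_eq_mul]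
            _ < gauge F (a • u + b • v - (a • x + b • y)) := by nlinarith
            _ ≤ a * gauge F (u - x) + b * gauge F (v - y) := by rw [h1]; exact gconv _ _
            _ = a * minTime F (Θ j0) x + b * minTime F (Θ j0) y := by rw [hgu, hgv]
      have hsum1 : ∑ i ∈ I, maxTime F (Ω i) (a • x + b • y) ≤
          ∑ i ∈ I, (a * maxTime F (Ω i) x + b * maxTime F (Ω i) y) :=
        Finset.sum_le_sum hCle
      have hsum2 : ∑ j ∈ J, minTime F (Θ j) (a • x + b • y) <
          ∑ j ∈ J, (a * minTime F (Θ j) x + b * minTime F (Θ j) y) :=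
        Finset.sum_lt_sum hTle ⟨j0, hj0, hTstrict⟩
      unfold HFun
      linarith
  refine ⟨⟨hSconv, fun x hx y hy hxy a b ha hb hab => by
    simpa [smul_eq_mul] using key x hx y hy hxy a b ha hb hab⟩, ?_⟩
  intro p hp q hq
  simp only [mem_setOf_eq] at hp hq
  by_contra hne
  have h := key p hp.1 q hq.1 hne (1/2) (1/2) (by norm_num) (by norm_num) (by norm_num)
  have hzS : (1/2 : ℝ) • p + (1/2 : ℝ) • q ∈ S :=
    hSconv hp.1 hq.1 (by norm_num) (by norm_num) (by norm_num)
  have h1 := hp.2 _ hzS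
  have h2 := hp.2 q hq.1
  have h3 := hq.2 p hp.1
  linarith
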